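/- arXiv:1908.01083 — 2 statements merged into one kernel-verified Lean document; each statement's English description precedes it below -/
import Mathlib

section
/- Let A be a symmetric positive definite n×n real matrix and b ∈ ℝⁿ, with exact solution x* = A⁻¹ b. Define the steepest descent iteration x_{k+1} = x_k + ω_k r_k, where r_k = b − A x_k and ω_k = (r_kᵀ r_k)/(r_kᵀ A r_k) is chosen to minimize f(x) = (1/2) xᵀ A x − bᵀ x along the direction r_k (with the convention that the iteration stops, i.e. x_{k+1} = x_k, when r_k = 0). Then the iterates x_k converge to x*. -/
open Matrix Filter

private lemma sd_dot_self_nonneg {n : ℕ} (v : Fin n → ℝ) : 0 ≤ v ⬝ᵥ v :=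
  Finset.sum_nonneg fun _ _ => mul_self_nonneg _

private lemma sd_dot_self_pos {n : ℕ} {v : Fin n → ℝ} (hv : v ≠ 0) : 0 < v ⬝ᵥ v := by
  obtain ⟨i, hi⟩ := Function.ne_iff.mp hv
  exact Finset.sum_pos' (fun j _ => mul_self_nonneg _)
    ⟨i, Finset.mem_univ i, mul_self_pos.mpr hi⟩

private lemma sd_quad_smul {n : ℕ} (A : Matrix (Fin n) (Fin n) ℝ) (c : ℝ) (v : Fin n → ℝ) :
    (c • v) ⬝ᵥ A.mulVec (c • v) = c * c * (v ⬝ᵥ A.mulVec v) := by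
  rw [Matrix.mulVec_smul, smul_dotProduct, dotProduct_smul,
    smul_eq_mul, smul_eq_mul, mul_assoc]

private lemma sd_dot_smul {n : ℕ} (c : ℝ) (v : Fin n → ℝ) :
    (c • v) ⬝ᵥ (c • v) = c * c * (v ⬝ᵥ v) := by
  rw [smul_dotProduct, dotProduct_smul, smul_eq_mul, smul_eq_mul, mul_assoc]

/-- Two-sided bounds on the quadratic form of a positive definite matrix. -/
private lemma sd_quad_bounds {n : ℕ} (A : Matrix (Fin n) (Fin n) ℝ) (hA : A.PosDef) :
    ∃ m M : ℝ, 0 < m ∧ 1 ≤ M ∧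
      ∀ v : Fin n → ℝ, m * (v ⬝ᵥ v) ≤ v ⬝ᵥ A.mulVec v ∧ v ⬝ᵥ A.mulVec v ≤ M * (v ⬝ᵥ v) := by
  set S : Set (Fin n → ℝ) := {v | v ⬝ᵥ v = 1} with hS
  -- normalization of a nonzero vector lies in S
  have hnorm : ∀ v : Fin n → ℝ, v ≠ 0 →
      ((Real.sqrt (v ⬝ᵥ v))⁻¹ • v) ∈ S ∧
      ((Real.sqrt (v ⬝ᵥ v))⁻¹ • v) ⬝ᵥ A.mulVec ((Real.sqrt (v ⬝ᵥ v))⁻¹ • v)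
        = (v ⬝ᵥ A.mulVec v) / (v ⬝ᵥ v) := by
    intro v hv
    have hvv : 0 < v ⬝ᵥ v := sd_dot_self_pos hv
    have hsq : Real.sqrt (v ⬝ᵥ v) * Real.sqrt (v ⬝ᵥ v) = v ⬝ᵥ v :=
      Real.mul_self_sqrt hvv.le
    have hs : Real.sqrt (v ⬝ᵥ v) ≠ 0 := by positivity
    constructor
    · show _ ⬝ᵥ _ = 1
      rw [sd_dot_smul]
      field_simp
      rw [sq, hsq]
    · rw [sd_quad_smul]
      field_simp
      rw [sq, hsq, mul_comm]
  have hcont : Continuous (fun v : Fin n → ℝ => v ⬝ᵥ A.mulVec v) := by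
    simp only [Matrix.mulVec, dotProduct]
    exact continuous_finset_sum _ fun i _ => (continuous_apply i).mul
      (continuous_finset_sum _ fun j _ => continuous_const.mul (continuous_apply j))
  by_cases hSne : S.Nonempty
  · -- S is compact
    have hclosed : IsClosed S := by
      have : Continuous (fun v : Fin n → ℝ => v ⬝ᵥ v) := by
        simp only [dotProduct]
        exact continuous_finset_sum _ fun i _ => (continuous_apply i).mul (continuous_apply i)
      exact isClosed_eq this continuous_const
    have hbdd : Bornology.IsBounded S := by
      refine (Metric.isBounded_closedBall (x := (0 : Fin n → ℝ)) (r := 1)).subset ?_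
      intro v hv
      simp only [Metric.mem_closedBall, dist_zero_right]
      refine pi_norm_le_iff_of_nonneg zero_le_one |>.mpr fun i => ?_
      have h1 : v i * v i ≤ v ⬝ᵥ v :=
        Finset.single_le_sum (fun j _ => mul_self_nonneg (v j)) (Finset.mem_univ i)
      rw [hv] at h1
      rw [Real.norm_eq_abs, abs_le]
      constructor <;> nlinarith
    have hcompact : IsCompact S := Metric.isCompact_of_isClosed_isBounded hclosed hbdd
    obtain ⟨u₀, hu₀S, hu₀min⟩ := hcompact.exists_isMinOn hSne hcont.continuousOn
    obtain ⟨u₁, hu₁S, hu₁max⟩ := hcompact.exists_isMaxOn hSne hcont.continuousOn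
    have hu₀ : ∀ u ∈ S, u₀ ⬝ᵥ A.mulVec u₀ ≤ u ⬝ᵥ A.mulVec u := fun u hu => hu₀min hu
    have hu₁ : ∀ u ∈ S, u ⬝ᵥ A.mulVec u ≤ u₁ ⬝ᵥ A.mulVec u₁ := fun u hu => hu₁max hu
    have hu₀ne : u₀ ≠ 0 := by
      intro h
      rw [hS] at hu₀S
      simp [h] at hu₀S
    have hm : 0 < u₀ ⬝ᵥ A.mulVec u₀ := by simpa using hA.dotProduct_mulVec_pos hu₀ne
    refine ⟨u₀ ⬝ᵥ A.mulVec u₀, max (u₁ ⬝ᵥ A.mulVec u₁) 1, hm, le_max_right _ _, fun v => ?_⟩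
    by_cases hv : v = 0
    · simp [hv]
    · obtain ⟨huS, hval⟩ := hnorm v hv
      have hvv : 0 < v ⬝ᵥ v := sd_dot_self_pos hv
      have h1 := hu₀ _ huS
      have h2 := hu₁ _ huS
      rw [hval] at h1 h2
      constructor
      · rw [le_div_iff₀ hvv] at h1; linarith
      · rw [div_le_iff₀ hvv] at h2
        have : u₁ ⬝ᵥ A.mulVec u₁ ≤ max (u₁ ⬝ᵥ A.mulVec u₁) 1 := le_max_left _ _
        nlinarith [hvv.le]
  · -- no unit vectors: every vector must be zero
    have hzero : ∀ v : Fin n → ℝ, v = 0 := by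
      intro v
      by_contra hv
      exact hSne ⟨_, (hnorm v hv).1⟩
    refine ⟨1, 1, one_pos, le_refl 1, fun v => ?_⟩
    rw [hzero v]
    simp

/-- Convergence of steepest descent for a symmetric positive definite matrix:
the iteration `x_{k+1} = x_k + ω_k r_k` with exact line search
`ω_k = (r_kᵀ r_k)/(r_kᵀ A r_k)` (and `x_{k+1} = x_k` when `r_k = 0`,
which is automatic here since division by zero yields `0` in Lean)
converges to the exact solution `x* = A⁻¹ b`. -/
theorem steepest_descent_converges
    (n : ℕ) (A : Matrix (Fin n) (Fin n) ℝ) (hA : A.PosDef)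
    (b : Fin n → ℝ) (x : ℕ → Fin n → ℝ)
    (r : ℕ → Fin n → ℝ) (hr : ∀ k, r k = b - A.mulVec (x k))
    (hx : ∀ k, x (k + 1) =
      x k + ((r k ⬝ᵥ r k) / (r k ⬝ᵥ A.mulVec (r k))) • r k) :
    Filter.Tendsto x Filter.atTop (nhds (A⁻¹.mulVec b)) := by
  -- basic facts about A
  have hdet : IsUnit A.det := isUnit_iff_ne_zero.mpr hA.det_pos.ne'
  have hT : Aᵀ = A := by
    have := hA.1
    rwa [Matrix.IsHermitian, Matrix.conjTranspose_eq_transpose_of_trivial] at this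
  have hsymm : ∀ v w : Fin n → ℝ, v ⬝ᵥ A.mulVec w = A.mulVec v ⬝ᵥ w := by
    intro v w
    conv_lhs => rw [dotProduct_mulVec, ← hT, vecMul_transpose]
  set xs : Fin n → ℝ := A⁻¹.mulVec b with hxs
  have hsol : A.mulVec xs = b := by
    rw [hxs, Matrix.mulVec_mulVec, Matrix.mul_nonsing_inv _ hdet, Matrix.one_mulVec]
  set e : ℕ → Fin n → ℝ := fun k => x k - xs with he
  have hAe : ∀ k, A.mulVec (e k) = -(r k) := by
    intro k
    rw [he, hr]
    simp only [Matrix.mulVec_sub, hsol]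
    abel
  have heA : ∀ k, A⁻¹.mulVec (r k) = -(e k) := by
    intro k
    rw [show r k = -(A.mulVec (e k)) from (neg_eq_iff_eq_neg.mpr (hAe k)).symm]
    rw [Matrix.mulVec_neg, Matrix.mulVec_mulVec, Matrix.nonsing_inv_mul _ hdet,
      Matrix.one_mulVec]
  set E : ℕ → ℝ := fun k => e k ⬝ᵥ A.mulVec (e k) with hE
  -- E in terms of residual
  have hEr : ∀ k, E k = r k ⬝ᵥ A⁻¹.mulVec (r k) := by
    intro k
    simp only [hE]
    rw [hAe, heA]
    simp [dotProduct_comm]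
  -- bounds
  obtain ⟨m₁, M₁, hm₁, hM₁, hb₁⟩ := sd_quad_bounds A hA
  obtain ⟨m₂, M₂, hm₂, hM₂, hb₂⟩ := sd_quad_bounds A⁻¹ hA.inv
  set c : ℝ := 1 - 1 / (M₁ * M₂) with hc
  have hM₁₂ : (1:ℝ) ≤ M₁ * M₂ := one_le_mul_of_one_le_of_one_le hM₁ hM₂
  have hc0 : 0 ≤ c := by
    rw [hc]
    have : 1 / (M₁ * M₂) ≤ 1 := by
      rw [div_le_one (by linarith)]; exact hM₁₂
    linarith
  have hc1 : c < 1 := by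
    rw [hc]
    have : 0 < 1 / (M₁ * M₂) := by positivity
    linarith
  have hEnonneg : ∀ k, 0 ≤ E k := by
    intro k
    have := (hb₁ (e k)).1
    have h2 := sd_dot_self_nonneg (e k)
    nlinarith
  -- one-step contraction
  have hstep : ∀ k, E (k + 1) ≤ c * E k := by
    intro k
    have hek1 : e (k + 1) = e k + ((r k ⬝ᵥ r k) / (r k ⬝ᵥ A.mulVec (r k))) • r k := by
      simp only [he]
      rw [hx k]
      abel
    by_cases hrk : r k = 0
    · have hEk : E k = 0 := by rw [hEr, hrk]; simp
      have hek : e (k + 1) = e k := by rw [hek1, hrk]; simp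
      have hE1 : E (k + 1) = E k := by simp only [hE, hek]
      rw [hE1, hEk, mul_zero]
    · set ω : ℝ := (r k ⬝ᵥ r k) / (r k ⬝ᵥ A.mulVec (r k)) with hω
      have hrAr : 0 < r k ⬝ᵥ A.mulVec (r k) := by simpa using hA.dotProduct_mulVec_pos hrk
      have hrr : 0 < r k ⬝ᵥ r k := sd_dot_self_pos hrk
      have hexp : E (k + 1) = E k - (r k ⬝ᵥ r k) * (r k ⬝ᵥ r k) / (r k ⬝ᵥ A.mulVec (r k)) := by
        simp only [hE, hek1]
        rw [Matrix.mulVec_add, Matrix.mulVec_smul, dotProduct_add,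
          add_dotProduct, add_dotProduct, dotProduct_smul,
          smul_dotProduct, smul_dotProduct, dotProduct_smul]
        have h1 : e k ⬝ᵥ A.mulVec (r k) = -(r k ⬝ᵥ r k) := by
          rw [hsymm, hAe]
          simp
        have h2 : r k ⬝ᵥ A.mulVec (e k) = -(r k ⬝ᵥ r k) := by
          rw [hAe]
          simp
        rw [h1, h2]
        simp only [smul_eq_mul, hω]
        field_simp
        ring
      rw [hexp]
      -- E k ≤ M₂ * (r⬝ᵥr) and (r⬝ᵥA r) ≤ M₁ * (r⬝ᵥr)
      have hE_le : E k ≤ M₂ * (r k ⬝ᵥ r k) := by rw [hEr]; exact (hb₂ (r k)).2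
      have hrAr_le : r k ⬝ᵥ A.mulVec (r k) ≤ M₁ * (r k ⬝ᵥ r k) := (hb₁ (r k)).2
      have key : E k / (M₁ * M₂) ≤ (r k ⬝ᵥ r k) * (r k ⬝ᵥ r k) / (r k ⬝ᵥ A.mulVec (r k)) := by
        rw [div_le_div_iff₀ (by positivity) hrAr]
        have hM₁pos : (0:ℝ) < M₁ := by linarith
        have hM₂pos : (0:ℝ) < M₂ := by linarith
        calc E k * (r k ⬝ᵥ A.mulVec (r k))
            ≤ (M₂ * (r k ⬝ᵥ r k)) * (M₁ * (r k ⬝ᵥ r k)) := by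
              apply mul_le_mul hE_le hrAr_le hrAr.le
              positivity
          _ = (r k ⬝ᵥ r k) * (r k ⬝ᵥ r k) * (M₁ * M₂) := by ring
      calc E k - (r k ⬝ᵥ r k) * (r k ⬝ᵥ r k) / (r k ⬝ᵥ A.mulVec (r k))
          ≤ E k - E k / (M₁ * M₂) := by linarith [key]
        _ = c * E k := by rw [hc]; ring
  -- geometric decay
  have hgeo : ∀ k, E k ≤ c ^ k * E 0 := by
    intro k
    induction k with
    | zero => simp
    | succ k ih =>
      calc E (k + 1) ≤ c * E k := hstep k
        _ ≤ c * (c ^ k * E 0) := by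
            apply mul_le_mul_of_nonneg_left ih hc0
        _ = c ^ (k + 1) * E 0 := by ring
  -- E → 0
  have hE0 : Tendsto E atTop (nhds 0) := by
    apply squeeze_zero hEnonneg hgeo
    have := (tendsto_pow_atTop_nhds_zero_of_lt_one hc0 hc1).mul_const (E 0)
    simpa using this
  -- e ⬝ᵥ e → 0
  have hee : Tendsto (fun k => e k ⬝ᵥ e k) atTop (nhds 0) := by
    apply squeeze_zero (fun k => sd_dot_self_nonneg (e k)) (g := fun k => E k / m₁)
    · intro k
      rw [le_div_iff₀ hm₁]
      have := (hb₁ (e k)).1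
      linarith [this]
    · have := hE0.div_const m₁
      simpa using this
  -- each coordinate of e → 0
  have hcoord : ∀ i, Tendsto (fun k => e k i) atTop (nhds 0) := by
    intro i
    have habs : Tendsto (fun k => |e k i|) atTop (nhds 0) := by
      have hsq : Tendsto (fun k => (e k i) * (e k i)) atTop (nhds 0) := by
        apply squeeze_zero (fun k => mul_self_nonneg _) (fun k => ?_) hee
        exact Finset.single_le_sum (fun j _ => mul_self_nonneg  (e k j)) (Finset.mem_univ i)
      have := (Real.continuous_sqrt.tendsto 0).comp hsq
      simpa [Function.comp_def, Real.sqrt_mul_self_eq_abs] using this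
    have h1 : Tendsto (fun k => -|e k i|) atTop (nhds 0) := by
      simpa using habs.neg
    exact tendsto_of_tendsto_of_tendsto_of_le_of_le h1 habs
      (fun k => neg_abs_le _) (fun k => le_abs_self _)
  -- conclude
  have hetendsto : Tendsto e atTop (nhds 0) := by
    rw [tendsto_pi_nhds]
    intro i
    simpa using hcoord i
  have : Tendsto (fun k => e k + xs) atTop (nhds (0 + xs)) := hetendsto.add_const xs
  simp only [zero_add] at this
  convert this using 2 with k
  rw [he]
  simp
end

section
/- Let A be an invertible n×n real matrix with rows aᵢ all nonzero, let b ∈ ℝⁿ, and let x* = A⁻¹ b. Define the cyclic Kaczmarz iteration: starting from any x⁽⁰⁾ ∈ ℝⁿ, at step j update the coordinate index i = (j mod n) + 1 by x⁽ʲ⁺¹⁾ = x⁽ʲ⁾ + (rᵢ⁽ʲ⁾/‖aᵢ‖₂²) aᵢ, where r⁽ʲ⁾ = b − A x⁽ʲ⁾. Then the sequence x⁽ʲ⁾ converges to x*. -/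
open Matrix Filter

/-- The `i`-th row of `A`, viewed as a vector of Euclidean space `ℝⁿ`. -/
noncomputable def matrixRow (n : ℕ) (A : Matrix (Fin n) (Fin n) ℝ) (i : Fin n) :
    EuclideanSpace ℝ (Fin n) :=
  (WithLp.equiv 2 (Fin n → ℝ)).symm (fun j => A i j)

/-- The row index relaxed at step `j` of the cyclic sweep: `j mod n` (0-based). -/
def cyclicIndex (n : ℕ) (hn : 0 < n) (j : ℕ) : Fin n :=
  ⟨j % n, Nat.mod_lt j hn⟩

/-- Convergence of the cyclic Kaczmarz iteration: for an invertible matrix `A`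
with nonzero rows, the iterates obtained by successively projecting onto the
hyperplanes of the system (cycling through the rows) converge to `x* = A⁻¹ b`. -/
theorem cyclic_kaczmarz_converges
    (n : ℕ) (hn : 0 < n) (A : Matrix (Fin n) (Fin n) ℝ)
    (hdet : IsUnit A.det) (hrows : ∀ i, matrixRow n A i ≠ 0)
    (b : EuclideanSpace ℝ (Fin n))
    (x : ℕ → EuclideanSpace ℝ (Fin n))
    (hx : ∀ j : ℕ,
      x (j + 1) = x j +
        ((b (cyclicIndex n hn j) - A.mulVec (x j) (cyclicIndex n hn j))
            / ‖matrixRow n A (cyclicIndex n hn j)‖ ^ 2)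
          • matrixRow n A (cyclicIndex n hn j)) :
    Filter.Tendsto x Filter.atTop
      (nhds ((WithLp.equiv 2 (Fin n → ℝ)).symm (A⁻¹.mulVec b))) := by
  classical
  haveI : Nonempty (Fin n) := ⟨⟨0, hn⟩⟩
  have hA1 : A * A⁻¹ = 1 := Matrix.mul_nonsing_inv A hdet
  have hA2 : A⁻¹ * A = 1 := Matrix.nonsing_inv_mul A hdet
  set a : Fin n → EuclideanSpace ℝ (Fin n) := matrixRow n A with ha
  set xs : EuclideanSpace ℝ (Fin n) :=
    (WithLp.equiv 2 (Fin n → ℝ)).symm (A⁻¹.mulVec b) with hxs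
  set idx : ℕ → Fin n := cyclicIndex n hn with hidx
  have hinner : ∀ (i : Fin n) (v : EuclideanSpace ℝ (Fin n)),
      (inner ℝ (a i) v : ℝ) = A.mulVec v i := by
    intro i v
    simp [ha, matrixRow, PiLp.inner_apply, RCLike.inner_apply, Matrix.mulVec,
      dotProduct, mul_comm]
  have hAxs : ∀ i, A.mulVec xs i = b i := by
    intro i
    have h : A.mulVec (A⁻¹.mulVec b) = b := by
      rw [Matrix.mulVec_mulVec, hA1, Matrix.one_mulVec]
    exact congrFun h i
  set e : ℕ → EuclideanSpace ℝ (Fin n) := fun j => x j - xs with he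
  set g : ℕ → ℝ := fun j => inner ℝ (a (idx j)) (e j) with hg
  have hna : ∀ i, ‖a i‖ ≠ 0 := fun i => norm_ne_zero_iff.mpr (hrows i)
  -- residual = -g
  have hres : ∀ j, b (idx j) - A.mulVec (x j) (idx j) = - g j := by
    intro j
    have h1 : (inner ℝ (a (idx j)) (x j) : ℝ) = A.mulVec (x j) (idx j) := hinner _ _
    have h2 : (inner ℝ (a (idx j)) xs : ℝ) = b (idx j) := by
      rw [hinner]; exact hAxs _
    rw [← h1, ← h2, hg]
    simp only [he, inner_sub_right]
    ring
  -- error recurrence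
  have hestep : ∀ j, e (j + 1) = e j - (g j / ‖a (idx j)‖ ^ 2) • a (idx j) := by
    intro j
    show x (j + 1) - xs = (x j - xs) - (g j / ‖a (idx j)‖ ^ 2) • a (idx j)
    rw [hx j, hres j, neg_div, neg_smul]
    abel
  -- energy decrease
  have hu : ∀ j, ‖e (j + 1)‖ ^ 2 = ‖e j‖ ^ 2 - g j ^ 2 / ‖a (idx j)‖ ^ 2 := by
    intro j
    rw [hestep j, norm_sub_sq_real, real_inner_smul_right, norm_smul, mul_pow,
      Real.norm_eq_abs, sq_abs]
    have hgj : (inner ℝ (e j) (a (idx j)) : ℝ) = g j :=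
      real_inner_comm (a (idx j)) (e j)
    rw [hgj]
    have h := hna (idx j)
    field_simp
    ring
  set u : ℕ → ℝ := fun j => ‖e j‖ ^ 2 with hu'
  have hmono : ∀ j, u (j + 1) ≤ u j := by
    intro j
    have h1 : (0 : ℝ) ≤ g j ^ 2 / ‖a (idx j)‖ ^ 2 := by positivity
    have h2 := hu j
    simp only [hu'] at *
    linarith
  have hanti : Antitone u := antitone_nat_of_succ_le hmono
  have hbdd : BddBelow (Set.range u) := by
    refine ⟨0, ?_⟩
    rintro _ ⟨j, rfl⟩
    positivity
  set L : ℝ := ⨅ j, u j with hLdef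
  have hL : Tendsto u atTop (nhds L) := tendsto_atTop_ciInf hanti hbdd
  -- the relaxed quantities tend to zero
  have hq : Tendsto (fun j => g j ^ 2 / ‖a (idx j)‖ ^ 2) atTop (nhds 0) := by
    have h1 : Tendsto (fun j => u j - u (j + 1)) atTop (nhds (L - L)) :=
      hL.sub (hL.comp (tendsto_add_atTop_nat 1))
    rw [sub_self] at h1
    refine h1.congr fun j => ?_
    have := hu j
    simp only [hu'] at *
    linarith
  -- uniform row-norm bounds
  have huniv : (Finset.univ : Finset (Fin n)).Nonempty := Finset.univ_nonempty
  set m : ℝ := Finset.univ.inf' huniv (fun i => ‖a i‖) with hm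
  set M : ℝ := Finset.univ.sup' huniv (fun i => ‖a i‖) with hM
  have hm_pos : 0 < m := by
    rw [hm, Finset.lt_inf'_iff]
    intro i _
    exact lt_of_le_of_ne (norm_nonneg _) (Ne.symm (hna i))
  have hm_le : ∀ i, m ≤ ‖a i‖ := fun i => Finset.inf'_le _ (Finset.mem_univ i)
  have hM_le : ∀ i, ‖a i‖ ≤ M := by
    intro i
    rw [hM]
    exact Finset.le_sup' (fun i => ‖a i‖) (Finset.mem_univ i)
  -- g² → 0
  have hg2 : Tendsto (fun j => g j ^ 2) atTop (nhds 0) := by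
    have hlim : Tendsto (fun j => M ^ 2 * (g j ^ 2 / ‖a (idx j)‖ ^ 2)) atTop
        (nhds (M ^ 2 * 0)) := hq.const_mul _
    rw [mul_zero] at hlim
    refine squeeze_zero (fun j => sq_nonneg _) (fun j => ?_) hlim
    have h1 : g j ^ 2 / ‖a (idx j)‖ ^ 2 * ‖a (idx j)‖ ^ 2 = g j ^ 2 :=
      div_mul_cancel₀ _ (pow_ne_zero 2 (hna _))
    have h2 : ‖a (idx j)‖ ^ 2 ≤ M ^ 2 :=
      pow_le_pow_left₀ (norm_nonneg _) (hM_le _) 2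
    have h3 : (0 : ℝ) ≤ g j ^ 2 / ‖a (idx j)‖ ^ 2 := by positivity
    nlinarith
  -- g → 0
  have hg0 : Tendsto g atTop (nhds 0) := by
    rw [tendsto_zero_iff_abs_tendsto_zero]
    have hcomp : (abs ∘ g) = fun j => Real.sqrt (g j ^ 2) :=
      funext fun j => (Real.sqrt_sq_eq_abs _).symm
    rw [hcomp]
    exact (Real.continuous_sqrt.tendsto' 0 0 (by simp)).comp hg2
  -- increments → 0
  have hd : Tendsto (fun j => e (j + 1) - e j) atTop (nhds 0) := by
    rw [tendsto_zero_iff_norm_tendsto_zero]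
    have hlim : Tendsto (fun j => |g j| / m) atTop (nhds 0) := by
      have := (tendsto_zero_iff_abs_tendsto_zero g).mp hg0
      simpa using this.div_const m
    refine squeeze_zero (fun j => norm_nonneg _) (fun j => ?_) hlim
    rw [hestep j, sub_sub_cancel_left, norm_neg, norm_smul, Real.norm_eq_abs,
      abs_div, abs_of_nonneg (by positivity : (0:ℝ) ≤ ‖a (idx j)‖ ^ 2)]
    have hpos := (hna (idx j)).lt_of_le' (norm_nonneg _)
    have h1 : |g j| / ‖a (idx j)‖ ^ 2 * ‖a (idx j)‖ = |g j| / ‖a (idx j)‖ := by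
      field_simp
    rw [h1]
    exact div_le_div_of_nonneg_left (abs_nonneg _) hm_pos (hm_le _)
  -- iterates are bounded
  have hub : ∀ j, e j ∈ Metric.closedBall (0 : EuclideanSpace ℝ (Fin n)) ‖e 0‖ := by
    intro j
    rw [Metric.mem_closedBall, dist_zero_right]
    have h1 : u j ≤ u 0 := hanti (Nat.zero_le j)
    have h2 : Real.sqrt (u j) ≤ Real.sqrt (u 0) := Real.sqrt_le_sqrt h1
    simpa only [hu', Real.sqrt_sq (norm_nonneg _)] using h2
  obtain ⟨y, -, φ, hφ, hyt⟩ :=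
    tendsto_subseq_of_bounded Metric.isBounded_closedBall (fun k => hub (n * k))
  -- the index sequences tend to infinity
  have hatTop : ∀ i : ℕ, Tendsto (fun k => n * φ k + i) atTop atTop := by
    intro i
    refine tendsto_atTop_mono (fun k => ?_) tendsto_id
    have h1 : k ≤ φ k := hφ.le_apply
    have h2 : φ k ≤ n * φ k := Nat.le_mul_of_pos_left _ hn
    simp only [id_eq]
    omega
  -- within a sweep, all shifted subsequences converge to y
  have hkey : ∀ i : ℕ, Tendsto (fun k => e (n * φ k + i)) atTop (nhds y) := by
    intro i
    induction i with
    | zero => simpa [Function.comp_def] using hyt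
    | succ i ih =>
      have h2 : Tendsto (fun k => e (n * φ k + i + 1) - e (n * φ k + i)) atTop
          (nhds 0) := hd.comp (hatTop i)
      have h3 := ih.add h2
      rw [add_zero] at h3
      refine h3.congr fun k => ?_
      have : n * φ k + (i + 1) = n * φ k + i + 1 := rfl
      rw [this]
      abel
  -- y is orthogonal to every row
  have hy_inner : ∀ i : Fin n, (inner ℝ (a i) y : ℝ) = 0 := by
    intro i
    have hidxeq : ∀ k : ℕ, idx (n * φ k + i.val) = i := by
      intro k
      apply Fin.ext
      show (n * φ k + i.val) % n = i.val
      rw [Nat.mul_add_mod, Nat.mod_eq_of_lt i.isLt]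
    have h1 : Tendsto (fun k => g (n * φ k + i.val)) atTop (nhds 0) :=
      hg0.comp (hatTop i.val)
    have h2 : Tendsto (fun k => g (n * φ k + i.val)) atTop
        (nhds (inner ℝ (a i) y : ℝ)) := by
      have h3 : Tendsto (fun k => (inner ℝ (a i) (e (n * φ k + i.val)) : ℝ)) atTop
          (nhds (inner ℝ (a i) y : ℝ)) := tendsto_const_nhds.inner (hkey i.val)
      refine h3.congr fun k => ?_
      rw [hg]
      simp only [hidxeq k]
    exact tendsto_nhds_unique h2 h1
  -- hence y = 0 by invertibility
  have hAy : A.mulVec y = 0 := funext fun i => (hinner i y).symm.trans (hy_inner i)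
  have hy0 : y = 0 := by
    have h5 : A⁻¹.mulVec (A.mulVec y) = A⁻¹.mulVec 0 := by rw [hAy]
    rw [Matrix.mulVec_mulVec, hA2, Matrix.one_mulVec, Matrix.mulVec_zero] at h5
    exact WithLp.ofLp_injective 2 h5
  -- conclude L = 0
  have h6 : Tendsto (fun k => u (n * φ k)) atTop (nhds 0) := by
    have h7 := ((hkey 0).norm.pow 2)
    rw [hy0, norm_zero] at h7
    simpa using h7
  have h8 : Tendsto (fun k => u (n * φ k)) atTop (nhds L) := by
    have h9 : Tendsto (fun k => n * φ k) atTop atTop := by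
      have := hatTop 0
      simpa using this
    exact hL.comp h9
  have hL0 : L = 0 := tendsto_nhds_unique h8 h6
  rw [hL0] at hL
  -- finish
  rw [tendsto_iff_norm_sub_tendsto_zero]
  have h10 : Tendsto (fun j => Real.sqrt (u j)) atTop (nhds 0) :=
    (Real.continuous_sqrt.tendsto' 0 0 (by simp)).comp hL
  refine h10.congr fun j => ?_
  simp only [hu', Real.sqrt_sq (norm_nonneg _)]
  rfl
end
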